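/- Let H be a Hopf *-algebra over ℂ whose underlying Hopf algebra has a regular antipode. If H is inner unitary, then H is inner linear. -/

import Mathlib

open scoped TensorProduct

section Defs

variable {H : Type*} [Ring H] [HopfAlgebra ℂ H]

/-- The subspace `P ⊗ Q` of `H ⊗ H`. -/
noncomputable def subTensor (P Q : Submodule ℂ H) : Submodule ℂ (H ⊗[ℂ] H) :=
  LinearMap.range (TensorProduct.map P.subtype Q.subtype)

/-- A two-sided ideal (as a `ℂ`-subspace closed under left and right multiplication). -/
structure IsTwoSidedIdealSub (I : Submodule ℂ H) : Prop where
  mul_mem_left : ∀ (x : H) ⦃a : H⦄, a ∈ I → x * a ∈ I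
  mul_mem_right : ∀ ⦃a : H⦄ (x : H), a ∈ I → a * x ∈ I

/-- A Hopf ideal: a two-sided ideal `I` with `ε(I) = 0`, `Δ(I) ⊆ I⊗H + H⊗I` and `S(I) ⊆ I`. -/
structure IsHopfIdeal (I : Submodule ℂ H) extends IsTwoSidedIdealSub I : Prop where
  counit_eq_zero : ∀ a ∈ I, Coalgebra.counit (R := ℂ) a = 0
  comul_mem : ∀ a ∈ I, Coalgebra.comul (R := ℂ) a ∈ subTensor I ⊤ ⊔ subTensor ⊤ I
  antipode_mem : ∀ a ∈ I, HopfAlgebra.antipode (R := ℂ) a ∈ I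

/-- Inner faithfulness of an algebra representation: the kernel contains no nonzero Hopf ideal. -/
def InnerFaithful {A : Type*} [Semiring A] [Algebra ℂ A] (π : H →ₐ[ℂ] A) : Prop :=
  ∀ J : Submodule ℂ H, IsHopfIdeal J → (∀ x ∈ J, π x = 0) → J = ⊥

/-- Inner linearity: there is a two-sided ideal of finite codimension containing no nonzero
Hopf ideal. -/
def InnerLinear (H : Type*) [Ring H] [HopfAlgebra ℂ H] : Prop :=
  ∃ I : Submodule ℂ H, IsTwoSidedIdealSub I ∧ FiniteDimensional ℂ (H ⧸ I) ∧
    ∀ J : Submodule ℂ H, IsHopfIdeal J → J ≤ I → J = ⊥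

end Defs

section Regular

variable {H : Type*} [Ring H] [HopfAlgebra ℂ H]

/-- `x ↦ Σ φ(x₍₁₎) x₍₂₎`. -/
noncomputable def lconv (φ : H →ₗ[ℂ] ℂ) : H →ₗ[ℂ] H :=
  (TensorProduct.lid ℂ H).toLinearMap ∘ₗ TensorProduct.map φ LinearMap.id ∘ₗ
    Coalgebra.comul (R := ℂ)

/-- `x ↦ Σ x₍₁₎ ψ(x₍₂₎)`. -/
noncomputable def rconv (ψ : H →ₗ[ℂ] ℂ) : H →ₗ[ℂ] H :=
  (TensorProduct.rid ℂ H).toLinearMap ∘ₗ TensorProduct.map LinearMap.id ψ ∘ₗ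
    Coalgebra.comul (R := ℂ)

/-- The convolution `Φ * id_H * Φ⁻¹ : x ↦ Σ Φ(x₍₁₎) x₍₂₎ Φ⁻¹(x₍₃₎)`, with `Φ⁻¹ = Φ ∘ S`. -/
noncomputable def convConj (Φ : H →ₐ[ℂ] ℂ) : H →ₗ[ℂ] H :=
  rconv (Φ.toLinearMap ∘ₗ HopfAlgebra.antipode (R := ℂ)) ∘ₗ lconv Φ.toLinearMap

/-- A group-like element: `Δ(a) = a ⊗ a` and `ε(a) = 1`. -/
def IsGroupLikeElem' (a : H) : Prop :=
  Coalgebra.comul (R := ℂ) a = a ⊗ₜ[ℂ] a ∧ Coalgebra.counit (R := ℂ) a = 1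

/-- `H` has a regular antipode. -/
def HasRegularAntipode (H : Type*) [Ring H] [HopfAlgebra ℂ H] : Prop :=
  ∃ (a : H) (Φ : H →ₐ[ℂ] ℂ) (m : ℕ), 1 ≤ m ∧ IsGroupLikeElem' a ∧
    ∀ x : H, (⇑(HopfAlgebra.antipode (R := ℂ) (A := H)))^[2 * m] x =
      a * convConj Φ x * HopfAlgebra.antipode (R := ℂ) a

end Regular

section Star

variable {H : Type*} [Ring H] [StarRing H] [Algebra ℂ H] [StarModule ℂ H]

/-- The map `* ⊗ *` on `H ⊗[ℂ] H`, sending `x ⊗ y` to `x* ⊗ y*`. -/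
noncomputable def starTensor : H ⊗[ℂ] H →+ H ⊗[ℂ] H :=
  TensorProduct.liftAddHom
    { toFun := fun x =>
        { toFun := fun y => star x ⊗ₜ[ℂ] star y
          map_zero' := by simp
          map_add' := fun y z => by simp [star_add, TensorProduct.tmul_add] }
      map_zero' := by ext y; simp
      map_add' := fun x z => by ext y; simp [star_add, TensorProduct.add_tmul] }
    (fun c x y => by
      simp [star_smul, TensorProduct.smul_tmul', TensorProduct.tmul_smul])

end Star

/-- A witness that a Hopf `*`-algebra is inner unitary: a finite-dimensional `C*`-algebra `A`
together with a `*`-representation `π : H → A` whose kernel contains no nonzero Hopf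
`*`-ideal. -/
structure InnerUnitaryWitness (H : Type*) [Ring H] [HopfAlgebra ℂ H] [StarRing H] where
  A : Type
  [nring : NormedRing A]
  [sring : StarRing A]
  [cstar : CStarRing A]
  [nalg : NormedAlgebra ℂ A]
  [smod : StarModule ℂ A]
  findim : FiniteDimensional ℂ A
  π : H →ₐ[ℂ] A
  star_map : ∀ x : H, π (star x) = star (π x)
  faithful : ∀ J : Submodule ℂ H, IsHopfIdeal J → (∀ x ∈ J, star x ∈ J) →
    (∀ x ∈ J, π x = 0) → J = ⊥

section Aux
open Coalgebra TensorProduct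
variable {H : Type*} [Ring H] [HopfAlgebra ℂ H]

local notation "S" => (HopfAlgebra.antipode (R := ℂ) (A := H))
local notation "Δ" => (Coalgebra.comul (R := ℂ) (A := H))
local notation "ε" => (Coalgebra.counit (R := ℂ) (A := H))

lemma sum_counit_left {x : H} {ι : Type*} (r : Coalgebra.Repr ℂ x ι) :
    ∑ i ∈ r.index, ε (r.left i) • r.right i = x := by
  have h := congrArg (TensorProduct.lid ℂ H) (Coalgebra.sum_counit_tmul_eq (R := ℂ) r)
  rw [map_sum] at h
  simpa using h

lemma sum_counit_right {x : H} {ι : Type*} (r : Coalgebra.Repr ℂ x ι) :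
    ∑ i ∈ r.index, ε (r.right i) • r.left i = x := by
  have h := congrArg (TensorProduct.rid ℂ H) (Coalgebra.sum_tmul_counit_eq (R := ℂ) r)
  rw [map_sum] at h
  simpa using h

/-- Apply a linear map to the coassociativity identity. -/
lemma coassoc_apply_sums {M : Type*} [AddCommMonoid M] [Module ℂ M]
    (Λ : H ⊗[ℂ] (H ⊗[ℂ] H) →ₗ[ℂ] M) {x : H} {ι : Type*} (r : Coalgebra.Repr ℂ x ι)
    {κ κ' : Type*} (p : ∀ i : ι, Coalgebra.Repr ℂ (r.left i) κ) (q : ∀ i : ι, Coalgebra.Repr ℂ (r.right i) κ') :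
    ∑ i ∈ r.index, ∑ j ∈ (p i).index,
        Λ ((p i).left j ⊗ₜ[ℂ] ((p i).right j ⊗ₜ[ℂ] r.right i))
    = ∑ i ∈ r.index, ∑ k ∈ (q i).index,
        Λ (r.left i ⊗ₜ[ℂ] ((q i).left k ⊗ₜ[ℂ] (q i).right k)) := by
  have h := congrArg Λ (Coalgebra.sum_tmul_tmul_eq (R := ℂ) r p q)
  rw [map_sum, map_sum] at h
  simp_rw [map_sum] at h
  exact h

/-- A representation of `comul (x*y)` from ones of `x` and `y`. -/
noncomputable def reprMul {x y : H} {ι κ : Type*} (r : Coalgebra.Repr ℂ x ι) (s : Coalgebra.Repr ℂ y κ) :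
    Coalgebra.Repr ℂ (x * y) (ι × κ) where
  index := r.index ×ˢ s.index
  left := fun p => r.left p.1 * s.left p.2
  right := fun p => r.right p.1 * s.right p.2
  eq := by
    rw [Bialgebra.comul_mul, ← r.eq, ← s.eq, Finset.sum_mul_sum, Finset.sum_product]
    simp [Algebra.TensorProduct.tmul_mul_tmul]

section Conv
variable {M : Type*} [AddCommMonoid M] [Module ℂ M]

/-- Convolution of linear maps `H → M` with respect to a bilinear multiplication `μ` on `M`. -/
noncomputable def conv (μ : M →ₗ[ℂ] M →ₗ[ℂ] M) (f g : H →ₗ[ℂ] M) : H →ₗ[ℂ] M :=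
  TensorProduct.lift μ ∘ₗ TensorProduct.map f g ∘ₗ Coalgebra.comul

/-- The convolution unit `x ↦ ε x • e`. -/
noncomputable def cunit (e : M) : H →ₗ[ℂ] M :=
  LinearMap.toSpanSingleton ℂ M e ∘ₗ Coalgebra.counit

@[simp] lemma cunit_apply (e : M) (x : H) : cunit (H := H) e x = ε x • e := rfl

lemma conv_repr (μ : M →ₗ[ℂ] M →ₗ[ℂ] M) (f g : H →ₗ[ℂ] M) {x : H} {ι : Type*} (r : Coalgebra.Repr ℂ x ι) :
    conv μ f g x = ∑ i ∈ r.index, μ (f (r.left i)) (g (r.right i)) := by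
  have h : conv μ f g x = TensorProduct.lift μ (TensorProduct.map f g (Δ x)) := rfl
  rw [h, ← r.eq]
  simp [map_sum]

lemma conv_cunit_left (μ : M →ₗ[ℂ] M →ₗ[ℂ] M) (e : M) (hle : ∀ m, μ e m = m)
    (f : H →ₗ[ℂ] M) : conv μ (cunit e) f = f := by
  ext x
  rw [conv_repr μ _ f (Coalgebra.Repr.arbitrary ℂ x)]
  have : ∀ i ∈ (ℛ ℂ x).index, μ (cunit (H := H) e ((ℛ ℂ x).left i)) (f ((ℛ ℂ x).right i))
      = f (ε ((ℛ ℂ x).left i) • (ℛ ℂ x).right i) := by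
    intro i _
    simp [hle]
  rw [Finset.sum_congr rfl this, ← map_sum, sum_counit_left]

lemma conv_cunit_right (μ : M →ₗ[ℂ] M →ₗ[ℂ] M) (e : M) (hre : ∀ m, μ m e = m)
    (f : H →ₗ[ℂ] M) : conv μ f (cunit e) = f := by
  ext x
  rw [conv_repr μ f _ (Coalgebra.Repr.arbitrary ℂ x)]
  have : ∀ i ∈ (ℛ ℂ x).index, μ (f ((ℛ ℂ x).left i)) (cunit (H := H) e ((ℛ ℂ x).right i))
      = f (ε ((ℛ ℂ x).right i) • (ℛ ℂ x).left i) := by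
    intro i _
    simp [hre]
  rw [Finset.sum_congr rfl this, ← map_sum, sum_counit_right]

lemma conv_assoc (μ : M →ₗ[ℂ] M →ₗ[ℂ] M) (hassoc : ∀ a b c, μ (μ a b) c = μ a (μ b c))
    (f g h : H →ₗ[ℂ] M) : conv μ (conv μ f g) h = conv μ f (conv μ g h) := by
  ext x
  set r := Coalgebra.Repr.arbitrary ℂ x
  set p : ∀ i : H × H, Coalgebra.Repr ℂ (r.left i) (H × H) := fun i => ℛ ℂ (r.left i)
  set q : ∀ i : H × H, Coalgebra.Repr ℂ (r.right i) (H × H) := fun i => ℛ ℂ (r.right i)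
  set Λ : H ⊗[ℂ] (H ⊗[ℂ] H) →ₗ[ℂ] M :=
    TensorProduct.lift μ ∘ₗ TensorProduct.map f (TensorProduct.lift μ ∘ₗ TensorProduct.map g h)
  have hΛ : ∀ u v w : H, Λ (u ⊗ₜ[ℂ] (v ⊗ₜ[ℂ] w)) = μ (f u) (μ (g v) (h w)) := by
    intro u v w; simp [Λ]
  have key := coassoc_apply_sums Λ r p q
  calc conv μ (conv μ f g) h x
      = ∑ i ∈ r.index, μ (conv μ f g (r.left i)) (h (r.right i)) := conv_repr ..
    _ = ∑ i ∈ r.index, ∑ j ∈ (p i).index,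
          Λ ((p i).left j ⊗ₜ[ℂ] ((p i).right j ⊗ₜ[ℂ] r.right i)) := by
        refine Finset.sum_congr rfl fun i _ => ?_
        rw [conv_repr μ f g (p i), map_sum, LinearMap.sum_apply]
        exact Finset.sum_congr rfl fun j _ => by rw [hΛ, hassoc]
    _ = ∑ i ∈ r.index, ∑ k ∈ (q i).index,
          Λ (r.left i ⊗ₜ[ℂ] ((q i).left k ⊗ₜ[ℂ] (q i).right k)) := key
    _ = ∑ i ∈ r.index, μ (f (r.left i)) (conv μ g h (r.right i)) := by
        refine Finset.sum_congr rfl fun i _ => ?_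
        rw [conv_repr μ g h (q i), map_sum]
        exact Finset.sum_congr rfl fun k _ => (hΛ ..)
    _ = conv μ f (conv μ g h) x := (conv_repr ..).symm

lemma conv_cancel (μ : M →ₗ[ℂ] M →ₗ[ℂ] M) (e : M)
    (hassoc : ∀ a b c, μ (μ a b) c = μ a (μ b c))
    (hle : ∀ m, μ e m = m) (hre : ∀ m, μ m e = m)
    {f g h : H →ₗ[ℂ] M} (h1 : conv μ f g = cunit e) (h2 : conv μ g h = cunit e) :
    f = h := by
  have : f = conv μ f (conv μ g h) := by rw [h2, conv_cunit_right μ e hre]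
  rw [this, ← conv_assoc μ hassoc, h1, conv_cunit_left μ e hle]

end Conv
end Aux
section Aux2
open Coalgebra TensorProduct
variable {H : Type*} [Ring H] [HopfAlgebra ℂ H]

local notation "S" => (HopfAlgebra.antipode (R := ℂ) (A := H))
local notation "Δ" => (Coalgebra.comul (R := ℂ) (A := H))
local notation "ε" => (Coalgebra.counit (R := ℂ) (A := H))

lemma conv_antipode_id :
    conv (LinearMap.mul ℂ H) S LinearMap.id = cunit 1 := by
  ext x
  rw [conv_repr _ _ _ (Coalgebra.Repr.arbitrary ℂ x)]
  simpa [Algebra.algebraMap_eq_smul_one] using HopfAlgebra.sum_antipode_mul_eq_algebraMap_counit (ℛ ℂ x)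

lemma conv_id_antipode :
    conv (LinearMap.mul ℂ H) LinearMap.id S = cunit 1 := by
  ext x
  rw [conv_repr _ _ _ (Coalgebra.Repr.arbitrary ℂ x)]
  simpa [Algebra.algebraMap_eq_smul_one] using HopfAlgebra.sum_mul_antipode_eq_algebraMap_counit (ℛ ℂ x)

lemma antipode_one' : S (1 : H) = 1 := by
  have h := HopfAlgebra.mul_antipode_rTensor_comul_apply (R := ℂ) (a := (1 : H))
  rw [Bialgebra.comul_one, Algebra.TensorProduct.one_def] at h
  simpa using h

lemma counit_antipode (x : H) : ε (S x) = ε x := by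
  have h := congrArg ε (HopfAlgebra.sum_antipode_mul_eq_algebraMap_counit (ℛ ℂ x))
  rw [map_sum] at h
  simp only [Bialgebra.counit_mul, Bialgebra.counit_algebraMap] at h
  calc ε (S x) = ε (S (∑ i ∈ (ℛ ℂ x).index, ε ((ℛ ℂ x).right i) • (ℛ ℂ x).left i)) := by
        rw [sum_counit_right]
    _ = ∑ i ∈ (ℛ ℂ x).index, ε ((ℛ ℂ x).right i) * ε (S ((ℛ ℂ x).left i)) := by
        rw [map_sum, map_sum]
        exact Finset.sum_congr rfl fun i _ => by rw [map_smul, map_smul, smul_eq_mul]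
    _ = ε x := by rw [← h]; exact Finset.sum_congr rfl fun i _ => mul_comm _ _

/-- bilinear convolution -/
noncomputable def convBil {M : Type*} [AddCommMonoid M] [Module ℂ M]
    (μ : M →ₗ[ℂ] M →ₗ[ℂ] M) : (H →ₗ[ℂ] M) →ₗ[ℂ] (H →ₗ[ℂ] M) →ₗ[ℂ] (H →ₗ[ℂ] M) :=
  LinearMap.mk₂ ℂ (conv μ)
    (fun f f' g => by
      ext x
      simp [conv_repr _ _ _ (ℛ ℂ x), Finset.sum_add_distrib])
    (fun c f g => by
      ext x
      simp [conv_repr _ _ _ (ℛ ℂ x), Finset.smul_sum])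
    (fun f g g' => by
      ext x
      simp [conv_repr _ _ _ (ℛ ℂ x), Finset.sum_add_distrib])
    (fun c f g => by
      ext x
      simp [conv_repr _ _ _ (ℛ ℂ x), Finset.smul_sum])

@[simp] lemma convBil_apply {M : Type*} [AddCommMonoid M] [Module ℂ M]
    (μ : M →ₗ[ℂ] M →ₗ[ℂ] M) (f g : H →ₗ[ℂ] M) : convBil μ f g = conv μ f g := rfl

/-- Antipode is anti-multiplicative. -/
lemma antipode_mul (x y : H) : S (x * y) = S y * S x := by
  classical
  set μH : H →ₗ[ℂ] H →ₗ[ℂ] H := LinearMap.mul ℂ H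
  set e₁ : H →ₗ[ℂ] H := cunit 1 with he₁
  set μ₁ := convBil (H := H) μH
  -- units and associativity for the convolution algebra N = H →ₗ H
  have hassoc₁ : ∀ a b c : H →ₗ[ℂ] H, μ₁ (μ₁ a b) c = μ₁ a (μ₁ b c) := fun a b c =>
    conv_assoc μH (fun a b c => by simp [μH, mul_assoc]) a b c
  have hle₁ : ∀ m : H →ₗ[ℂ] H, μ₁ e₁ m = m := fun m =>
    conv_cunit_left μH 1 (fun m => by simp [μH]) m
  have hre₁ : ∀ m : H →ₗ[ℂ] H, μ₁ m e₁ = m := fun m =>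
    conv_cunit_right μH 1 (fun m => by simp [μH]) m
  set F : H →ₗ[ℂ] (H →ₗ[ℂ] H) := (LinearMap.llcomp ℂ H H H S) ∘ₗ (LinearMap.mul ℂ H) with hF
  have hFapp : ∀ u v : H, F u v = S (u * v) := fun u v => rfl
  set G : H →ₗ[ℂ] (H →ₗ[ℂ] H) :=
    { toFun := fun u => (LinearMap.mulRight ℂ (S u)) ∘ₗ S
      map_add' := fun u v => by ext w; simp [mul_add]
      map_smul' := fun c u => by ext w; simp } with hG
  have hGapp : ∀ u v : H, G u v = S v * S u := fun u v => rfl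
  set Mu : H →ₗ[ℂ] (H →ₗ[ℂ] H) := LinearMap.mul ℂ H
  have hMuapp : ∀ u v : H, Mu u v = u * v := fun u v => rfl
  -- identity A : F ∗ Mu = unit
  have idA : conv μ₁ F Mu = cunit e₁ := by
    refine LinearMap.ext fun x => LinearMap.ext fun y => ?_
    have h1 : conv μ₁ F Mu x = ∑ i ∈ (ℛ ℂ x).index,
        conv μH (F ((ℛ ℂ x).left i)) (Mu ((ℛ ℂ x).right i)) := conv_repr ..
    rw [h1, LinearMap.sum_apply]
    have h2 : ∀ i ∈ (ℛ ℂ x).index,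
        conv μH (F ((ℛ ℂ x).left i)) (Mu ((ℛ ℂ x).right i)) y
        = ∑ j ∈ (ℛ ℂ y).index,
            S ((ℛ ℂ x).left i * (ℛ ℂ y).left j) * ((ℛ ℂ x).right i * (ℛ ℂ y).right j) := by
      intro i _
      rw [conv_repr _ _ _ (ℛ ℂ y)]
      rfl
    rw [Finset.sum_congr rfl h2]
    have h3 := HopfAlgebra.sum_antipode_mul_eq_algebraMap_counit (reprMul (ℛ ℂ x) (ℛ ℂ y))
    simp only [reprMul] at h3
    rw [Finset.sum_product] at h3
    rw [h3]
    simp [Algebra.algebraMap_eq_smul_one, smul_smul, he₁]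
  -- identity B : Mu ∗ G = unit
  have idB : conv μ₁ Mu G = cunit e₁ := by
    refine LinearMap.ext fun x => LinearMap.ext fun y => ?_
    have h1 : conv μ₁ Mu G x = ∑ i ∈ (ℛ ℂ x).index,
        conv μH (Mu ((ℛ ℂ x).left i)) (G ((ℛ ℂ x).right i)) := conv_repr ..
    rw [h1, LinearMap.sum_apply]
    have h2 : ∀ i ∈ (ℛ ℂ x).index,
        conv μH (Mu ((ℛ ℂ x).left i)) (G ((ℛ ℂ x).right i)) y
        = ε y • ((ℛ ℂ x).left i * S ((ℛ ℂ x).right i)) := by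
      intro i _
      rw [conv_repr _ _ _ (ℛ ℂ y)]
      have : ∀ j ∈ (ℛ ℂ y).index,
          μH (Mu ((ℛ ℂ x).left i) ((ℛ ℂ y).left j)) (G ((ℛ ℂ x).right i) ((ℛ ℂ y).right j))
          = (ℛ ℂ x).left i *
              (((ℛ ℂ y).left j * S ((ℛ ℂ y).right j)) * S ((ℛ ℂ x).right i)) := by
        intro j _
        show ((ℛ ℂ x).left i * (ℛ ℂ y).left j) * (S ((ℛ ℂ y).right j) * S ((ℛ ℂ x).right i)) = _
        rw [mul_assoc, mul_assoc]
      rw [Finset.sum_congr rfl this, ← Finset.mul_sum, ← Finset.sum_mul,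
        HopfAlgebra.sum_mul_antipode_eq_algebraMap_counit (ℛ ℂ y)]
      rw [Algebra.algebraMap_eq_smul_one]
      rw [smul_mul_assoc, one_mul, mul_smul_comm]
    rw [Finset.sum_congr rfl h2, ← Finset.smul_sum, HopfAlgebra.sum_mul_antipode_eq_algebraMap_counit (ℛ ℂ x)]
    simp only [Algebra.algebraMap_eq_smul_one, he₁, smul_smul, cunit_apply, LinearMap.smul_apply]
    rw [mul_comm]
  have hFG : F = G := conv_cancel μ₁ e₁ hassoc₁ hle₁ hre₁ idA idB
  have := congrArg (fun Z => Z x y) hFG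
  simpa [hFapp, hGapp] using this

end Aux2
section Aux3
open Coalgebra TensorProduct
variable {H : Type*} [Ring H] [HopfAlgebra ℂ H]

local notation "S" => (HopfAlgebra.antipode (R := ℂ) (A := H))
local notation "Δ" => (Coalgebra.comul (R := ℂ) (A := H))
local notation "ε" => (Coalgebra.counit (R := ℂ) (A := H))

lemma lemmaW (a z : H) {ι : Type*} (t : Coalgebra.Repr ℂ z ι) :
    ∑ k ∈ t.index, (S (t.left k) ⊗ₜ[ℂ] S a) * Δ (t.right k)
      = (1 : H) ⊗ₜ[ℂ] (S a * z) := by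
  classical
  set Λ₂ : H ⊗[ℂ] (H ⊗[ℂ] H) →ₗ[ℂ] H ⊗[ℂ] H :=
    (TensorProduct.map ((LinearMap.mul' ℂ H) ∘ₗ (HopfAlgebra.antipode (R := ℂ)).rTensor H)
        (LinearMap.mulLeft ℂ (S a))) ∘ₗ (TensorProduct.assoc ℂ H H H).symm.toLinearMap
    with hΛ₂
  have hΛ₂app : ∀ u v w : H, Λ₂ (u ⊗ₜ[ℂ] (v ⊗ₜ[ℂ] w)) = (S u * v) ⊗ₜ[ℂ] (S a * w) := by
    intro u v w; simp [hΛ₂]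
  set p : ∀ k : ι, Coalgebra.Repr ℂ (t.left k) (H × H) := fun k => ℛ ℂ (t.left k)
  set q : ∀ k : ι, Coalgebra.Repr ℂ (t.right k) (H × H) := fun k => ℛ ℂ (t.right k)
  have step1 : ∀ k ∈ t.index, (S (t.left k) ⊗ₜ[ℂ] S a) * Δ (t.right k)
      = ∑ l ∈ (q k).index, Λ₂ (t.left k ⊗ₜ[ℂ] ((q k).left l ⊗ₜ[ℂ] (q k).right l)) := by
    intro k _
    rw [← (q k).eq, Finset.mul_sum]
    exact Finset.sum_congr rfl fun l _ => by
      rw [hΛ₂app, Algebra.TensorProduct.tmul_mul_tmul]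
  rw [Finset.sum_congr rfl step1, ← coassoc_apply_sums Λ₂ t p q]
  have step2 : ∀ k ∈ t.index, ∑ j ∈ (p k).index,
      Λ₂ ((p k).left j ⊗ₜ[ℂ] ((p k).right j ⊗ₜ[ℂ] t.right k))
      = ε (t.left k) • ((1:H) ⊗ₜ[ℂ] (S a * t.right k)) := by
    intro k _
    have : ∀ j ∈ (p k).index, Λ₂ ((p k).left j ⊗ₜ[ℂ] ((p k).right j ⊗ₜ[ℂ] t.right k))
        = (S ((p k).left j) * (p k).right j) ⊗ₜ[ℂ] (S a * t.right k) := fun j _ => hΛ₂app ..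
    rw [Finset.sum_congr rfl this, ← TensorProduct.sum_tmul,
      HopfAlgebra.sum_antipode_mul_eq_algebraMap_counit (p k), Algebra.algebraMap_eq_smul_one,
      TensorProduct.smul_tmul']
  rw [Finset.sum_congr rfl step2]
  calc ∑ k ∈ t.index, ε (t.left k) • ((1:H) ⊗ₜ[ℂ] (S a * t.right k))
      = (1:H) ⊗ₜ[ℂ] (S a * ∑ k ∈ t.index, ε (t.left k) • t.right k) := by
        rw [Finset.mul_sum, TensorProduct.tmul_sum]
        exact Finset.sum_congr rfl fun k _ => by
          rw [mul_smul_comm, TensorProduct.tmul_smul]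
    _ = (1 : H) ⊗ₜ[ℂ] (S a * z) := by rw [sum_counit_left t]

end Aux3
section Aux4
open Coalgebra TensorProduct
variable {H : Type*} [Ring H] [HopfAlgebra ℂ H]

local notation "S" => (HopfAlgebra.antipode (R := ℂ) (A := H))
local notation "Δ" => (Coalgebra.comul (R := ℂ) (A := H))
local notation "ε" => (Coalgebra.counit (R := ℂ) (A := H))

/-- The antipode is an anti-coalgebra map. -/
lemma comul_antipode (x : H) :
    Δ (S x) = (TensorProduct.comm ℂ H H) (TensorProduct.map S S (Δ x)) := by
  classical
  set μ₂ : (H ⊗[ℂ] H) →ₗ[ℂ] (H ⊗[ℂ] H) →ₗ[ℂ] (H ⊗[ℂ] H) := LinearMap.mul ℂ (H ⊗[ℂ] H)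
  have hassoc : ∀ a b c : H ⊗[ℂ] H, μ₂ (μ₂ a b) c = μ₂ a (μ₂ b c) := fun a b c => mul_assoc a b c
  have hle : ∀ m : H ⊗[ℂ] H, μ₂ 1 m = m := fun m => one_mul m
  have hre : ∀ m : H ⊗[ℂ] H, μ₂ m 1 = m := fun m => mul_one m
  set D : H →ₗ[ℂ] H ⊗[ℂ] H := Coalgebra.comul with hD
  set F' : H →ₗ[ℂ] H ⊗[ℂ] H := Coalgebra.comul ∘ₗ HopfAlgebra.antipode ℂ with hF'
  set G' : H →ₗ[ℂ] H ⊗[ℂ] H := (TensorProduct.comm ℂ H H).toLinearMap ∘ₗ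
      TensorProduct.map S S ∘ₗ Coalgebra.comul with hG'
  -- identity C : D ∗ F' = unit
  have idC : conv μ₂ D F' = cunit 1 := by
    ext x
    rw [conv_repr _ _ _ (Coalgebra.Repr.arbitrary ℂ x)]
    have : ∀ i ∈ (ℛ ℂ x).index, μ₂ (D ((ℛ ℂ x).left i)) (F' ((ℛ ℂ x).right i))
        = Δ ((ℛ ℂ x).left i * S ((ℛ ℂ x).right i)) := by
      intro i _
      show Δ _ * Δ _ = _
      rw [← Bialgebra.comul_mul]
    rw [Finset.sum_congr rfl this, ← map_sum, HopfAlgebra.sum_mul_antipode_eq_algebraMap_counit (ℛ ℂ x)]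
    simp [Algebra.algebraMap_eq_smul_one]
  -- identity D : G' ∗ D = unit
  have idD : conv μ₂ G' D = cunit 1 := by
    ext x
    rw [conv_repr _ _ _ (Coalgebra.Repr.arbitrary ℂ x)]
    set r := Coalgebra.Repr.arbitrary ℂ x
    set p : ∀ i : H × H, Coalgebra.Repr ℂ (r.left i) (H × H) := fun i => ℛ ℂ (r.left i)
    set q : ∀ i : H × H, Coalgebra.Repr ℂ (r.right i) (H × H) := fun i => ℛ ℂ (r.right i)
    set Λ : H ⊗[ℂ] (H ⊗[ℂ] H) →ₗ[ℂ] H ⊗[ℂ] H :=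
      (LinearMap.mul' ℂ (H ⊗[ℂ] H)) ∘ₗ
        (TensorProduct.map ((TensorProduct.comm ℂ H H).toLinearMap ∘ₗ TensorProduct.map S S)
          Coalgebra.comul) ∘ₗ (TensorProduct.assoc ℂ H H H).symm.toLinearMap with hΛ
    have hΛapp : ∀ u v w : H, Λ (u ⊗ₜ[ℂ] (v ⊗ₜ[ℂ] w)) = (S v ⊗ₜ[ℂ] S u) * Δ w := by
      intro u v w; simp [hΛ]
    have step1 : ∀ i ∈ r.index, μ₂ (G' (r.left i)) (D (r.right i))
        = ∑ j ∈ (p i).index, Λ ((p i).left j ⊗ₜ[ℂ] ((p i).right j ⊗ₜ[ℂ] r.right i)) := by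
      intro i _
      have hG'i : G' (r.left i) = ∑ j ∈ (p i).index, S ((p i).right j) ⊗ₜ[ℂ] S ((p i).left j) := by
        show (TensorProduct.comm ℂ H H) (TensorProduct.map S S (Δ (r.left i))) = _
        rw [← (p i).eq, map_sum, map_sum]
        simp
      show G' (r.left i) * D (r.right i) = _
      rw [hG'i, Finset.sum_mul]
      exact Finset.sum_congr rfl fun j _ => by rw [hΛapp]
    rw [Finset.sum_congr rfl step1, coassoc_apply_sums Λ r p q]
    have step2 : ∀ i ∈ r.index, ∑ k ∈ (q i).index,
        Λ (r.left i ⊗ₜ[ℂ] ((q i).left k ⊗ₜ[ℂ] (q i).right k))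
        = (1:H) ⊗ₜ[ℂ] (S (r.left i) * r.right i) := by
      intro i _
      have : ∀ k ∈ (q i).index, Λ (r.left i ⊗ₜ[ℂ] ((q i).left k ⊗ₜ[ℂ] (q i).right k))
          = (S ((q i).left k) ⊗ₜ[ℂ] S (r.left i)) * Δ ((q i).right k) := fun k _ => hΛapp ..
      rw [Finset.sum_congr rfl this, lemmaW (r.left i) (r.right i) (q i)]
    rw [Finset.sum_congr rfl step2, ← TensorProduct.tmul_sum,
      HopfAlgebra.sum_antipode_mul_eq_algebraMap_counit r]
    simp [Algebra.algebraMap_eq_smul_one, Algebra.TensorProduct.one_def]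
  have hfg : G' = F' := conv_cancel μ₂ 1 hassoc hle hre idD idC
  have := congrArg (fun Z => Z x) hfg.symm
  simpa [hF', hG'] using this

/-- A representation of `comul (S x)`. -/
noncomputable def reprAntipode {x : H} {ι : Type*} (r : Coalgebra.Repr ℂ x ι) :
    Coalgebra.Repr ℂ (S x) ι where
  index := r.index
  left := fun i => S (r.right i)
  right := fun i => S (r.left i)
  eq := by
    rw [comul_antipode, ← r.eq, map_sum, map_sum]
    simp

end Aux4
section Aux5
open Coalgebra TensorProduct
variable {H : Type*} [Ring H] [HopfAlgebra ℂ H]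

local notation "S" => (HopfAlgebra.antipode (R := ℂ) (A := H))
local notation "Δ" => (Coalgebra.comul (R := ℂ) (A := H))
local notation "ε" => (Coalgebra.counit (R := ℂ) (A := H))

/-- convolution of functionals -/
noncomputable abbrev fconv (α β : H →ₗ[ℂ] ℂ) : H →ₗ[ℂ] ℂ := conv (LinearMap.mul ℂ ℂ) α β

lemma lconv_repr (φ : H →ₗ[ℂ] ℂ) {x : H} {ι : Type*} (r : Coalgebra.Repr ℂ x ι) :
    lconv φ x = ∑ i ∈ r.index, φ (r.left i) • r.right i := by
  have h : lconv φ x = TensorProduct.lid ℂ H (TensorProduct.map φ LinearMap.id (Δ x)) := rfl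
  rw [h, ← r.eq, map_sum, map_sum]
  simp

lemma rconv_repr (ψ : H →ₗ[ℂ] ℂ) {x : H} {ι : Type*} (r : Coalgebra.Repr ℂ x ι) :
    rconv ψ x = ∑ i ∈ r.index, ψ (r.right i) • r.left i := by
  have h : rconv ψ x = TensorProduct.rid ℂ H (TensorProduct.map LinearMap.id ψ (Δ x)) := rfl
  rw [h, ← r.eq, map_sum, map_sum]
  simp

lemma lconv_counit : lconv (Coalgebra.counit (R := ℂ) (A := H)) = LinearMap.id := by
  ext x
  rw [lconv_repr _ (Coalgebra.Repr.arbitrary ℂ x)]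
  simpa using sum_counit_left (ℛ ℂ x)

lemma rconv_counit : rconv (Coalgebra.counit (R := ℂ) (A := H)) = LinearMap.id := by
  ext x
  rw [rconv_repr _ (Coalgebra.Repr.arbitrary ℂ x)]
  simpa using sum_counit_right (ℛ ℂ x)

lemma lconv_lconv (α β : H →ₗ[ℂ] ℂ) : lconv α ∘ₗ lconv β = lconv (fconv β α) := by
  ext x
  set r := Coalgebra.Repr.arbitrary ℂ x
  set p : ∀ i : H × H, Coalgebra.Repr ℂ (r.left i) (H × H) := fun i => ℛ ℂ (r.left i)
  set q : ∀ i : H × H, Coalgebra.Repr ℂ (r.right i) (H × H) := fun i => ℛ ℂ (r.right i)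
  set Λ : H ⊗[ℂ] (H ⊗[ℂ] H) →ₗ[ℂ] H :=
    (TensorProduct.lid ℂ H).toLinearMap ∘ₗ
      TensorProduct.map β ((TensorProduct.lid ℂ H).toLinearMap ∘ₗ
        TensorProduct.map α LinearMap.id) with hΛ
  have hΛapp : ∀ u v w : H, Λ (u ⊗ₜ[ℂ] (v ⊗ₜ[ℂ] w)) = β u • (α v • w) := by
    intro u v w
    simp [hΛ, smul_smul, mul_comm]
  have key := coassoc_apply_sums Λ r p q
  calc (lconv α ∘ₗ lconv β) x
      = ∑ i ∈ r.index, β (r.left i) • lconv α (r.right i) := by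
        rw [LinearMap.comp_apply, lconv_repr β r, map_sum]
        exact Finset.sum_congr rfl fun i _ => by rw [map_smul]
    _ = ∑ i ∈ r.index, ∑ k ∈ (q i).index,
          Λ (r.left i ⊗ₜ[ℂ] ((q i).left k ⊗ₜ[ℂ] (q i).right k)) := by
        refine Finset.sum_congr rfl fun i _ => ?_
        rw [lconv_repr α (q i), Finset.smul_sum]
        exact Finset.sum_congr rfl fun k _ => (hΛapp ..).symm
    _ = ∑ i ∈ r.index, ∑ j ∈ (p i).index,
          Λ ((p i).left j ⊗ₜ[ℂ] ((p i).right j ⊗ₜ[ℂ] r.right i)) := key.symm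
    _ = lconv (fconv β α) x := by
        rw [lconv_repr (fconv β α) r]
        refine Finset.sum_congr rfl fun i _ => ?_
        rw [conv_repr _ _ _ (p i), Finset.sum_smul]
        exact Finset.sum_congr rfl fun j _ => by
          rw [hΛapp, smul_smul]
          rfl

lemma rconv_rconv (α β : H →ₗ[ℂ] ℂ) : rconv α ∘ₗ rconv β = rconv (fconv α β) := by
  ext x
  set r := Coalgebra.Repr.arbitrary ℂ x
  set p : ∀ i : H × H, Coalgebra.Repr ℂ (r.left i) (H × H) := fun i => ℛ ℂ (r.left i)
  set q : ∀ i : H × H, Coalgebra.Repr ℂ (r.right i) (H × H) := fun i => ℛ ℂ (r.right i)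
  set Λ : H ⊗[ℂ] (H ⊗[ℂ] H) →ₗ[ℂ] H :=
    (TensorProduct.rid ℂ H).toLinearMap ∘ₗ
      (TensorProduct.map LinearMap.id ((LinearMap.mul' ℂ ℂ) ∘ₗ TensorProduct.map α β))
    with hΛ
  have hΛapp : ∀ u v w : H, Λ (u ⊗ₜ[ℂ] (v ⊗ₜ[ℂ] w)) = (α v * β w) • u := by
    intro u v w; simp [hΛ]
  have key := coassoc_apply_sums Λ r p q
  calc (rconv α ∘ₗ rconv β) x
      = ∑ i ∈ r.index, β (r.right i) • rconv α (r.left i) := by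
        rw [LinearMap.comp_apply, rconv_repr β r, map_sum]
        exact Finset.sum_congr rfl fun i _ => by rw [map_smul]
    _ = ∑ i ∈ r.index, ∑ j ∈ (p i).index,
          Λ ((p i).left j ⊗ₜ[ℂ] ((p i).right j ⊗ₜ[ℂ] r.right i)) := by
        refine Finset.sum_congr rfl fun i _ => ?_
        rw [rconv_repr α (p i), Finset.smul_sum]
        exact Finset.sum_congr rfl fun j _ => by
          rw [hΛapp, smul_smul, mul_comm]
    _ = ∑ i ∈ r.index, ∑ k ∈ (q i).index,
          Λ (r.left i ⊗ₜ[ℂ] ((q i).left k ⊗ₜ[ℂ] (q i).right k)) := key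
    _ = rconv (fconv α β) x := by
        rw [rconv_repr (fconv α β) r]
        refine Finset.sum_congr rfl fun i _ => ?_
        rw [conv_repr _ _ _ (q i), Finset.sum_smul]
        exact Finset.sum_congr rfl fun k _ => by
          rw [hΛapp]
          rfl

end Aux5
section Aux6
open Coalgebra TensorProduct
variable {H : Type*} [Ring H] [HopfAlgebra ℂ H]

local notation "S" => (HopfAlgebra.antipode (R := ℂ) (A := H))
local notation "Δ" => (Coalgebra.comul (R := ℂ) (A := H))
local notation "ε" => (Coalgebra.counit (R := ℂ) (A := H))

lemma lconv_rconv_comm (α β : H →ₗ[ℂ] ℂ) : lconv α ∘ₗ rconv β = rconv β ∘ₗ lconv α := by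
  ext x
  set r := Coalgebra.Repr.arbitrary ℂ x
  set p : ∀ i : H × H, Coalgebra.Repr ℂ (r.left i) (H × H) := fun i => ℛ ℂ (r.left i)
  set q : ∀ i : H × H, Coalgebra.Repr ℂ (r.right i) (H × H) := fun i => ℛ ℂ (r.right i)
  set Λ : H ⊗[ℂ] (H ⊗[ℂ] H) →ₗ[ℂ] H :=
    (TensorProduct.lid ℂ H).toLinearMap ∘ₗ
      TensorProduct.map α ((TensorProduct.rid ℂ H).toLinearMap ∘ₗ
        TensorProduct.map LinearMap.id β) with hΛ
  have hΛapp : ∀ u v w : H, Λ (u ⊗ₜ[ℂ] (v ⊗ₜ[ℂ] w)) = β w • (α u • v) := by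
    intro u v w
    simp [hΛ]
  have key := coassoc_apply_sums Λ r p q
  calc (lconv α ∘ₗ rconv β) x
      = ∑ i ∈ r.index, β (r.right i) • lconv α (r.left i) := by
        rw [LinearMap.comp_apply, rconv_repr β r, map_sum]
        exact Finset.sum_congr rfl fun i _ => by rw [map_smul]
    _ = ∑ i ∈ r.index, ∑ j ∈ (p i).index,
          Λ ((p i).left j ⊗ₜ[ℂ] ((p i).right j ⊗ₜ[ℂ] r.right i)) := by
        refine Finset.sum_congr rfl fun i _ => ?_
        rw [lconv_repr α (p i), Finset.smul_sum]
        exact Finset.sum_congr rfl fun j _ => (hΛapp ..).symm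
    _ = ∑ i ∈ r.index, ∑ k ∈ (q i).index,
          Λ (r.left i ⊗ₜ[ℂ] ((q i).left k ⊗ₜ[ℂ] (q i).right k)) := key
    _ = (rconv β ∘ₗ lconv α) x := by
        rw [LinearMap.comp_apply, lconv_repr α r, map_sum]
        refine Finset.sum_congr rfl fun i _ => ?_
        rw [map_smul, rconv_repr β (q i), Finset.smul_sum]
        exact Finset.sum_congr rfl fun k _ => by rw [hΛapp, smul_comm]

variable (Φ : H →ₐ[ℂ] ℂ)

lemma fconv_phi_phiS : fconv Φ.toLinearMap (Φ.toLinearMap ∘ₗ S) =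
    Coalgebra.counit (R := ℂ) (A := H) := by
  ext x
  rw [conv_repr _ _ _ (Coalgebra.Repr.arbitrary ℂ x)]
  have : ∀ i ∈ (ℛ ℂ x).index,
      (LinearMap.mul ℂ ℂ) (Φ.toLinearMap ((ℛ ℂ x).left i))
        ((Φ.toLinearMap ∘ₗ S) ((ℛ ℂ x).right i))
      = Φ ((ℛ ℂ x).left i * S ((ℛ ℂ x).right i)) := by
    intro i _
    simp [map_mul]
  rw [Finset.sum_congr rfl this, ← map_sum, HopfAlgebra.sum_mul_antipode_eq_smul (ℛ ℂ x)]
  simp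

lemma fconv_phiS_phi : fconv (Φ.toLinearMap ∘ₗ S) Φ.toLinearMap =
    Coalgebra.counit (R := ℂ) (A := H) := by
  ext x
  rw [conv_repr _ _ _ (Coalgebra.Repr.arbitrary ℂ x)]
  have : ∀ i ∈ (ℛ ℂ x).index,
      (LinearMap.mul ℂ ℂ) ((Φ.toLinearMap ∘ₗ S) ((ℛ ℂ x).left i))
        (Φ.toLinearMap ((ℛ ℂ x).right i))
      = Φ (S ((ℛ ℂ x).left i) * (ℛ ℂ x).right i) := by
    intro i _
    simp [map_mul]
  rw [Finset.sum_congr rfl this, ← map_sum, HopfAlgebra.sum_antipode_mul_eq_smul (ℛ ℂ x)]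
  simp

/-- right inverse of `convConj Φ` -/
noncomputable def convConjInv : H →ₗ[ℂ] H :=
  lconv (Φ.toLinearMap ∘ₗ HopfAlgebra.antipode (R := ℂ)) ∘ₗ rconv Φ.toLinearMap

lemma convConj_convConjInv : (convConj Φ) ∘ₗ (convConjInv (H := H) Φ) = LinearMap.id := by
  set φ := Φ.toLinearMap
  set ψ := Φ.toLinearMap ∘ₗ HopfAlgebra.antipode (R := ℂ) (A := H)
  show (rconv ψ ∘ₗ lconv φ) ∘ₗ (lconv ψ ∘ₗ rconv φ) = LinearMap.id
  have h1 : lconv (H := H) φ ∘ₗ lconv ψ = LinearMap.id := by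
    rw [lconv_lconv, fconv_phiS_phi, lconv_counit]
  calc (rconv ψ ∘ₗ lconv φ) ∘ₗ lconv ψ ∘ₗ rconv φ
      = rconv ψ ∘ₗ (lconv φ ∘ₗ lconv ψ) ∘ₗ rconv φ := by
        simp only [LinearMap.comp_assoc]
    _ = rconv ψ ∘ₗ rconv φ := by rw [h1, LinearMap.id_comp]
    _ = LinearMap.id := by rw [rconv_rconv, fconv_phiS_phi, rconv_counit]

lemma grouplike_mul_antipode {a : H} (ha : IsGroupLikeElem' a) :
    a * S a = 1 ∧ S a * a = 1 := by
  obtain ⟨hcom, hcou⟩ := ha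
  constructor
  · have h := HopfAlgebra.mul_antipode_lTensor_comul_apply (R := ℂ) (a := a)
    rw [hcom, hcou] at h
    simpa using h
  · have h := HopfAlgebra.mul_antipode_rTensor_comul_apply (R := ℂ) (a := a)
    rw [hcom, hcou] at h
    simpa using h

lemma antipode_surjective (hreg : HasRegularAntipode H) :
    Function.Surjective (⇑(HopfAlgebra.antipode (R := ℂ) (A := H))) := by
  obtain ⟨a, Φ, m, hm, hgl, hS⟩ := hreg
  obtain ⟨haS, hSa⟩ := grouplike_mul_antipode hgl
  intro z
  set x0 := convConjInv Φ (S a * z * a) with hx0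
  have h1 : convConj Φ x0 = S a * z * a := by
    have := congrArg (fun f => f (S a * z * a)) (convConj_convConjInv Φ)
    simpa [hx0] using this
  have h2 : (⇑(HopfAlgebra.antipode (R := ℂ) (A := H)))^[2*m] x0 = z := by
    rw [hS x0, h1]
    calc a * (S a * z * a) * S a = (a * S a) * z * (a * S a) := by noncomm_ring
      _ = z := by rw [haS, one_mul, mul_one]
  have hpos : 2*m = (2*m - 1) + 1 := by omega
  refine ⟨(⇑(HopfAlgebra.antipode (R := ℂ) (A := H)))^[2*m-1] x0, ?_⟩
  have := Function.iterate_succ_apply' (⇑(HopfAlgebra.antipode (R := ℂ) (A := H))) (2*m-1) x0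
  rw [← this, Nat.succ_eq_add_one, ← hpos, h2]

end Aux6
section Aux7
open Coalgebra TensorProduct
variable {H : Type*} [Ring H] [HopfAlgebra ℂ H] [StarRing H] [StarModule ℂ H]

local notation "S" => (HopfAlgebra.antipode (R := ℂ) (A := H))
local notation "Δ" => (Coalgebra.comul (R := ℂ) (A := H))
local notation "ε" => (Coalgebra.counit (R := ℂ) (A := H))

@[simp] lemma starTensor_tmul (x y : H) :
    starTensor (x ⊗ₜ[ℂ] y) = star x ⊗ₜ[ℂ] star y := rfl

/-- conjugation of the antipode as a `ℂ`-linear map -/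
noncomputable def Vmap : H →ₗ[ℂ] H where
  toFun := fun x => star (S (star x))
  map_add' := fun x y => by simp [star_add]
  map_smul' := fun c x => by simp [star_smul]

@[simp] lemma Vmap_apply (x : H) : Vmap x = star (S (star x)) := rfl

/-- representation of `comul (star x)` -/
noncomputable def reprStar (hsc : ∀ x : H, Δ (star x) = starTensor (Δ x))
    {x : H} {ι : Type*} (r : Coalgebra.Repr ℂ x ι) :
    Coalgebra.Repr ℂ (star x) ι where
  index := r.index
  left := fun i => star (r.left i)
  right := fun i => star (r.right i)
  eq := by
    rw [hsc, ← r.eq, map_sum]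
    simp

lemma star_one_conv (hsc : ∀ x : H, Δ (star x) = starTensor (Δ x))
    (hcu : ∀ x : H, ε (star x) = starRingEnd ℂ (ε x))
    {x : H} {ι : Type*} (r : Coalgebra.Repr ℂ x ι) :
    ∑ i ∈ r.index, Vmap (r.right i) * r.left i = ε x • 1 := by
  have h := HopfAlgebra.sum_mul_antipode_eq_algebraMap_counit (reprStar hsc r)
  have h2 := congrArg (star : H → H) h
  rw [star_sum] at h2
  have h3 : ∀ i ∈ (reprStar hsc r).index,
      star ((reprStar hsc r).left i * S ((reprStar hsc r).right i))
      = Vmap (r.right i) * r.left i := by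
    intro i _
    show star (star (r.left i) * S (star (r.right i))) = _
    rw [star_mul, star_star]
    rfl
  refine ((Finset.sum_congr rfl h3).symm.trans (h2.trans ?_) :)
  rw [Algebra.algebraMap_eq_smul_one, star_smul, star_one, hcu]
  simp

lemma conv_VS_S (hsc : ∀ x : H, Δ (star x) = starTensor (Δ x))
    (hcu : ∀ x : H, ε (star x) = starRingEnd ℂ (ε x)) :
    conv (LinearMap.mul ℂ H) (Vmap ∘ₗ HopfAlgebra.antipode (R := ℂ))
      (HopfAlgebra.antipode (R := ℂ)) = cunit 1 := by
  ext y
  rw [conv_repr _ _ _ (Coalgebra.Repr.arbitrary ℂ y)]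
  have h := star_one_conv hsc hcu (reprAntipode (ℛ ℂ y))
  have h2 : ∀ i ∈ (ℛ ℂ y).index,
      (LinearMap.mul ℂ H) ((Vmap ∘ₗ HopfAlgebra.antipode (R := ℂ)) ((ℛ ℂ y).left i))
        (S ((ℛ ℂ y).right i))
      = Vmap ((reprAntipode (ℛ ℂ y)).right i) * (reprAntipode (ℛ ℂ y)).left i := fun i _ => rfl
  refine (Finset.sum_congr rfl h2).trans (h.trans ?_)
  rw [counit_antipode]
  rfl

lemma VS_id (hsc : ∀ x : H, Δ (star x) = starTensor (Δ x))
    (hcu : ∀ x : H, ε (star x) = starRingEnd ℂ (ε x)) :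
    Vmap ∘ₗ (HopfAlgebra.antipode (R := ℂ) (A := H)) = LinearMap.id :=
  conv_cancel (LinearMap.mul ℂ H) 1 (fun a b c => by simp [mul_assoc])
    (fun m => by simp) (fun m => by simp) (conv_VS_S hsc hcu) (conv_antipode_id)

lemma antipode_injective (hsc : ∀ x : H, Δ (star x) = starTensor (Δ x))
    (hcu : ∀ x : H, ε (star x) = starRingEnd ℂ (ε x)) :
    Function.Injective (⇑(HopfAlgebra.antipode (R := ℂ) (A := H))) := by
  intro x y hxy
  have hx := congrArg (fun f => f x) (VS_id hsc hcu)
  have hy := congrArg (fun f => f y) (VS_id hsc hcu)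
  simp only [LinearMap.comp_apply, LinearMap.id_apply] at hx hy
  rw [← hx, ← hy, hxy]

lemma S_star_S (hsc : ∀ x : H, Δ (star x) = starTensor (Δ x))
    (hcu : ∀ x : H, ε (star x) = starRingEnd ℂ (ε x)) (x : H) :
    S (star (S x)) = star x := by
  have h := congrArg (fun f => f x) (VS_id hsc hcu)
  simp only [LinearMap.comp_apply, LinearMap.id_apply, Vmap_apply] at h
  have := congrArg (star : H → H) h
  rwa [star_star] at this

end Aux7
section Aux8
open Coalgebra TensorProduct
variable {H : Type*} [Ring H] [HopfAlgebra ℂ H]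

local notation "S" => (HopfAlgebra.antipode (R := ℂ) (A := H))
local notation "Δ" => (Coalgebra.comul (R := ℂ) (A := H))
local notation "ε" => (Coalgebra.counit (R := ℂ) (A := H))

lemma tmul_mem_subTensor {P Q : Submodule ℂ H} {p q : H} (hp : p ∈ P) (hq : q ∈ Q) :
    p ⊗ₜ[ℂ] q ∈ subTensor P Q :=
  ⟨(⟨p, hp⟩ : P) ⊗ₜ[ℂ] (⟨q, hq⟩ : Q), rfl⟩

lemma subTensor_induction {P Q : Submodule ℂ H} {C : H ⊗[ℂ] H → Prop}
    (h0 : C 0) (hadd : ∀ u v, C u → C v → C (u + v))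
    (htmul : ∀ p ∈ P, ∀ q ∈ Q, C (p ⊗ₜ[ℂ] q)) :
    ∀ u ∈ subTensor P Q, C u := by
  rintro u ⟨t, rfl⟩
  induction t with
  | zero => simpa using h0
  | tmul p q => exact htmul p p.2 q q.2
  | add u v hu hv =>
      rw [map_add]
      exact hadd _ _ hu hv

lemma subTensor_mono {P P' Q Q' : Submodule ℂ H} (h1 : P ≤ P') (h2 : Q ≤ Q') :
    subTensor P Q ≤ subTensor P' Q' := by
  intro u hu
  refine subTensor_induction (C := fun u => u ∈ subTensor P' Q') (Submodule.zero_mem _)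
    (fun u v hu hv => Submodule.add_mem _ hu hv)
    (fun p hp q hq => tmul_mem_subTensor (h1 hp) (h2 hq)) u hu

lemma subTensor_map {P Q : Submodule ℂ H} (f g : H →ₗ[ℂ] H) {u : H ⊗[ℂ] H}
    (hu : u ∈ subTensor P Q) :
    TensorProduct.map f g u ∈ subTensor (P.map f) (Q.map g) := by
  refine subTensor_induction (C := fun u => TensorProduct.map f g u ∈ subTensor (P.map f) (Q.map g))
    (by simp) (fun u v hu hv => by rw [map_add]; exact Submodule.add_mem _ hu hv)
    (fun p hp q hq => ?_) u hu
  rw [TensorProduct.map_tmul]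
  exact tmul_mem_subTensor (Submodule.mem_map_of_mem hp) (Submodule.mem_map_of_mem hq)

lemma subTensor_comm {P Q : Submodule ℂ H} {u : H ⊗[ℂ] H} (hu : u ∈ subTensor P Q) :
    TensorProduct.comm ℂ H H u ∈ subTensor Q P := by
  refine subTensor_induction (C := fun u => TensorProduct.comm ℂ H H u ∈ subTensor Q P)
    (by simp) (fun u v hu hv => by rw [map_add]; exact Submodule.add_mem _ hu hv)
    (fun p hp q hq => ?_) u hu
  rw [TensorProduct.comm_tmul]
  exact tmul_mem_subTensor hq hp

/-- the "star image" (= star preimage) of a submodule -/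
def starSub [StarRing H] [StarModule ℂ H] (P : Submodule ℂ H) : Submodule ℂ H where
  carrier := {x | star x ∈ P}
  add_mem' := fun hx hy => by
    simp only [Set.mem_setOf_eq, star_add]
    exact Submodule.add_mem _ hx hy
  zero_mem' := by simp
  smul_mem' := fun c x hx => by
    simp only [Set.mem_setOf_eq, star_smul]
    exact Submodule.smul_mem _ _ hx

@[simp] lemma mem_starSub [StarRing H] [StarModule ℂ H] {P : Submodule ℂ H} {x : H} :
    x ∈ starSub P ↔ star x ∈ P := Iff.rfl

@[simp] lemma starSub_starSub [StarRing H] [StarModule ℂ H] (P : Submodule ℂ H) :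
    starSub (starSub P) = P := by
  ext x; simp

@[simp] lemma starSub_top [StarRing H] [StarModule ℂ H] :
    starSub (⊤ : Submodule ℂ H) = ⊤ := by
  ext x; simp

lemma subTensor_star [StarRing H] [StarModule ℂ H] {P Q : Submodule ℂ H} {u : H ⊗[ℂ] H}
    (hu : u ∈ subTensor P Q) :
    starTensor u ∈ subTensor (starSub P) (starSub Q) := by
  refine subTensor_induction (C := fun u => starTensor u ∈ subTensor (starSub P) (starSub Q))
    (by simp) (fun u v hu hv => by rw [map_add]; exact Submodule.add_mem _ hu hv)
    (fun p hp q hq => ?_) u hu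
  rw [starTensor_tmul]
  exact tmul_mem_subTensor (by simpa using hp) (by simpa using hq)

/-- `Z` is a coideal-like subspace. -/
def NiceC (Z : Submodule ℂ H) : Prop :=
  ∀ z ∈ Z, Δ z ∈ subTensor Z ⊤ ⊔ subTensor ⊤ Z

lemma NiceC.map_antipode {Z : Submodule ℂ H} (hZ : NiceC Z) :
    NiceC (Z.map (HopfAlgebra.antipode (R := ℂ))) := by
  rintro z' ⟨z, hz, rfl⟩
  rw [comul_antipode]
  rcases Submodule.mem_sup.mp (hZ z hz) with ⟨u, hu, v, hv, huv⟩
  rw [← huv, map_add, map_add]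
  refine Submodule.add_mem _ ?_ ?_
  · refine Submodule.mem_sup_right ?_
    have := subTensor_comm (subTensor_map (P := Z) (Q := ⊤)
      (HopfAlgebra.antipode (R := ℂ)) (HopfAlgebra.antipode (R := ℂ)) hu)
    exact subTensor_mono le_top (le_refl _) this
  · refine Submodule.mem_sup_left ?_
    have := subTensor_comm (subTensor_map (P := ⊤) (Q := Z)
      (HopfAlgebra.antipode (R := ℂ)) (HopfAlgebra.antipode (R := ℂ)) hv)
    exact subTensor_mono (le_refl _) le_top this

lemma NiceC.starSub [StarRing H] [StarModule ℂ H]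
    (hsc : ∀ x : H, Δ (star x) = starTensor (Δ x))
    {Z : Submodule ℂ H} (hZ : NiceC Z) : NiceC (starSub Z) := by
  intro z hz
  have h1 : Δ z = starTensor (Δ (star z)) := by
    rw [← hsc, star_star]
  rw [h1]
  rcases Submodule.mem_sup.mp (hZ _ hz) with ⟨u, hu, v, hv, huv⟩
  rw [← huv, map_add]
  refine Submodule.add_mem _ ?_ ?_
  · exact Submodule.mem_sup_left
      (subTensor_mono (le_refl _) (by simp) (subTensor_star hu))
  · exact Submodule.mem_sup_right
      (subTensor_mono (by simp) (le_refl _) (subTensor_star hv))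

lemma lconv_mem {Z : Submodule ℂ H} (hZ : NiceC Z) (φ : H →ₗ[ℂ] ℂ)
    (hφ : ∀ z ∈ Z, φ z = 0) {z : H} (hz : z ∈ Z) : lconv φ z ∈ Z := by
  have h : lconv φ z = TensorProduct.lid ℂ H (TensorProduct.map φ LinearMap.id (Δ z)) := rfl
  rw [h]
  rcases Submodule.mem_sup.mp (hZ z hz) with ⟨u, hu, v, hv, huv⟩
  rw [← huv, map_add, map_add]
  refine Submodule.add_mem _ ?_ ?_
  · refine subTensor_induction
      (C := fun u => TensorProduct.lid ℂ H (TensorProduct.map φ LinearMap.id u) ∈ Z)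
      (by simp) (fun u v hu hv => by rw [map_add, map_add]; exact Submodule.add_mem _ hu hv)
      (fun p hp q hq => ?_) u hu
    rw [TensorProduct.map_tmul]
    simp only [TensorProduct.lid_tmul, LinearMap.id_coe, id_eq]
    rw [hφ p hp]
    simpa using Submodule.zero_mem Z
  · refine subTensor_induction
      (C := fun v => TensorProduct.lid ℂ H (TensorProduct.map φ LinearMap.id v) ∈ Z)
      (by simp) (fun u v hu hv => by rw [map_add, map_add]; exact Submodule.add_mem _ hu hv)
      (fun p hp q hq => ?_) v hv
    rw [TensorProduct.map_tmul]
    simp only [TensorProduct.lid_tmul, LinearMap.id_coe, id_eq]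
    exact Submodule.smul_mem _ _ hq

lemma rconv_mem {Z : Submodule ℂ H} (hZ : NiceC Z) (ψ : H →ₗ[ℂ] ℂ)
    (hψ : ∀ z ∈ Z, ψ z = 0) {z : H} (hz : z ∈ Z) : rconv ψ z ∈ Z := by
  have h : rconv ψ z = TensorProduct.rid ℂ H (TensorProduct.map LinearMap.id ψ (Δ z)) := rfl
  rw [h]
  rcases Submodule.mem_sup.mp (hZ z hz) with ⟨u, hu, v, hv, huv⟩
  rw [← huv, map_add, map_add]
  refine Submodule.add_mem _ ?_ ?_
  · refine subTensor_induction
      (C := fun u => TensorProduct.rid ℂ H (TensorProduct.map LinearMap.id ψ u) ∈ Z)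
      (by simp) (fun u v hu hv => by rw [map_add, map_add]; exact Submodule.add_mem _ hu hv)
      (fun p hp q hq => ?_) u hu
    rw [TensorProduct.map_tmul]
    simp only [TensorProduct.rid_tmul, LinearMap.id_coe, id_eq]
    exact Submodule.smul_mem _ _ hp
  · refine subTensor_induction
      (C := fun v => TensorProduct.rid ℂ H (TensorProduct.map LinearMap.id ψ v) ∈ Z)
      (by simp) (fun u v hu hv => by rw [map_add, map_add]; exact Submodule.add_mem _ hu hv)
      (fun p hp q hq => ?_) v hv
    rw [TensorProduct.map_tmul]
    simp only [TensorProduct.rid_tmul, LinearMap.id_coe, id_eq]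
    rw [hψ q hq]
    simpa using Submodule.zero_mem Z

end Aux8
section Aux9
open Coalgebra TensorProduct
variable {H : Type*} [Ring H] [HopfAlgebra ℂ H]

local notation "S" => (HopfAlgebra.antipode (R := ℂ) (A := H))
local notation "Δ" => (Coalgebra.comul (R := ℂ) (A := H))
local notation "ε" => (Coalgebra.counit (R := ℂ) (A := H))

lemma counit_Spow (n : ℕ) (x : H) : ε ((⇑S)^[n] x) = ε x := by
  induction n generalizing x with
  | zero => rfl
  | succ n ih =>
      rw [Function.iterate_succ_apply', counit_antipode, ih]

lemma Spow_mul (n : ℕ) :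
    (∀ u v : H, (⇑S)^[n] (u * v) = (⇑S)^[n] u * (⇑S)^[n] v) ∨
    (∀ u v : H, (⇑S)^[n] (u * v) = (⇑S)^[n] v * (⇑S)^[n] u) := by
  induction n with
  | zero => left; intro u v; rfl
  | succ n ih =>
      rcases ih with h | h
      · right
        intro u v
        rw [Function.iterate_succ_apply', h, antipode_mul,
          ← Function.iterate_succ_apply' (⇑S) n u, ← Function.iterate_succ_apply' (⇑S) n v]
      · left
        intro u v
        rw [Function.iterate_succ_apply', h, antipode_mul,
          ← Function.iterate_succ_apply' (⇑S) n u, ← Function.iterate_succ_apply' (⇑S) n v]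

/-- (S-power) as a linear map -/
noncomputable def SP (n : ℕ) : H →ₗ[ℂ] H := (HopfAlgebra.antipode (R := ℂ) (A := H)) ^ n

@[simp] lemma SP_apply (n : ℕ) (x : H) : SP n x = (⇑S)^[n] x := Module.End.pow_apply _ n x

lemma ts_starSub [StarRing H] [StarModule ℂ H] {Z : Submodule ℂ H}
    (hZ : IsTwoSidedIdealSub Z) : IsTwoSidedIdealSub (starSub Z) where
  mul_mem_left := fun x a ha => by
    rw [mem_starSub, star_mul]
    exact hZ.mul_mem_right _ ha
  mul_mem_right := fun a x ha => by
    rw [mem_starSub, star_mul]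
    exact hZ.mul_mem_left _ ha

lemma ts_map_pow (hsurj : Function.Surjective (⇑S : H → H)) (n : ℕ)
    {Z : Submodule ℂ H} (hZ : IsTwoSidedIdealSub Z) :
    IsTwoSidedIdealSub (Z.map (SP n)) where
  mul_mem_left := by
    rintro x a ⟨z, hz, rfl⟩
    obtain ⟨y, hy⟩ := (hsurj.iterate n) x
    rcases Spow_mul (H := H) n with h | h
    · exact ⟨y * z, hZ.mul_mem_left y hz, by simp only [SP_apply]; rw [h, hy]⟩
    · exact ⟨z * y, hZ.mul_mem_right y hz, by simp only [SP_apply]; rw [h, hy]⟩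
  mul_mem_right := by
    rintro a x ⟨z, hz, rfl⟩
    obtain ⟨y, hy⟩ := (hsurj.iterate n) x
    rcases Spow_mul (H := H) n with h | h
    · exact ⟨z * y, hZ.mul_mem_right y hz, by simp only [SP_apply]; rw [h, hy]⟩
    · exact ⟨y * z, hZ.mul_mem_left y hz, by simp only [SP_apply]; rw [h, hy]⟩

lemma nice_pow {Z : Submodule ℂ H} (hZ : NiceC Z) (n : ℕ) : NiceC (Z.map (SP n)) := by
  induction n with
  | zero =>
      have : Z.map (SP (H := H) 0) = Z := by
        rw [show SP (H := H) 0 = LinearMap.id from rfl, Submodule.map_id]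
      rwa [this]
  | succ n ih =>
      have : SP (H := H) (n+1) = (HopfAlgebra.antipode (R := ℂ)) ∘ₗ SP n := by
        rw [SP, pow_succ']
        rfl
      rw [this, Submodule.map_comp (SP n) (HopfAlgebra.antipode (R := ℂ)) Z]
      exact NiceC.map_antipode ih

lemma mem_map_SP {Z : Submodule ℂ H} {n : ℕ} {z : H} (hz : z ∈ Z) :
    (⇑S)^[n] z ∈ Z.map (SP n) := ⟨z, hz, by simp⟩

lemma phi_T (Φ : H →ₐ[ℂ] ℂ) (y : H) : Φ (convConj Φ y) = Φ y := by
  have sub1 : ∀ w : H, Φ (rconv (Φ.toLinearMap ∘ₗ HopfAlgebra.antipode (R := ℂ)) w)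
      = ε w := by
    intro w
    rw [rconv_repr _ (Coalgebra.Repr.arbitrary ℂ w), map_sum]
    have : ∀ i ∈ (ℛ ℂ w).index,
        Φ ((Φ.toLinearMap ∘ₗ HopfAlgebra.antipode (R := ℂ)) ((ℛ ℂ w).right i) • (ℛ ℂ w).left i)
        = Φ ((ℛ ℂ w).left i * S ((ℛ ℂ w).right i)) := by
      intro i _
      rw [map_smul, map_mul]
      simp only [LinearMap.comp_apply, AlgHom.toLinearMap_apply, smul_eq_mul]
      ring
    rw [Finset.sum_congr rfl this, ← map_sum, HopfAlgebra.sum_mul_antipode_eq_smul]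
    simp
  have sub2 : ε (lconv Φ.toLinearMap y) = Φ y := by
    rw [lconv_repr _ (Coalgebra.Repr.arbitrary ℂ y), map_sum]
    have : ∀ i ∈ (ℛ ℂ y).index,
        ε (Φ.toLinearMap ((ℛ ℂ y).left i) • (ℛ ℂ y).right i)
        = Φ (ε ((ℛ ℂ y).right i) • (ℛ ℂ y).left i) := by
      intro i _
      rw [map_smul, map_smul]
      simp only [AlgHom.toLinearMap_apply, smul_eq_mul]
      ring
    rw [Finset.sum_congr rfl this, ← map_sum, sum_counit_right]
  calc Φ (convConj Φ y) = ε (lconv Φ.toLinearMap y) := sub1 _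
    _ = Φ y := sub2

lemma phi_S2m {a : H} (Φ : H →ₐ[ℂ] ℂ) {m : ℕ} (hgl : IsGroupLikeElem' a)
    (hS : ∀ x : H, (⇑S)^[2 * m] x = a * convConj Φ x * HopfAlgebra.antipode (R := ℂ) a)
    (y : H) : Φ ((⇑S)^[2*m] y) = Φ y := by
  obtain ⟨haS, _⟩ := grouplike_mul_antipode hgl
  rw [hS y, map_mul, map_mul, phi_T]
  have : Φ a * Φ (S a) = 1 := by
    rw [← map_mul, haS, map_one]
  calc Φ a * Φ y * Φ (S a) = Φ y * (Φ a * Φ (S a)) := by ring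
    _ = Φ y := by rw [this, mul_one]

lemma phi_vanish_pow {a : H} (Φ : H →ₐ[ℂ] ℂ) {m : ℕ} (hm : 1 ≤ m) (hgl : IsGroupLikeElem' a)
    (hS : ∀ x : H, (⇑S)^[2 * m] x = a * convConj Φ x * HopfAlgebra.antipode (R := ℂ) a)
    (Y : Submodule ℂ H) (hbase : ∀ j, j < 2*m → ∀ z ∈ Y, Φ ((⇑S)^[j] z) = 0) :
    ∀ n, ∀ z ∈ Y, Φ ((⇑S)^[n] z) = 0 := by
  intro n
  induction n using Nat.strong_induction_on with
  | _ n ih =>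
      intro z hz
      by_cases hn : n < 2*m
      · exact hbase n hn z hz
      · push_neg at hn
        have h1 : n = 2*m + (n - 2*m) := by omega
        rw [h1, Function.iterate_add_apply, phi_S2m Φ hgl hS]
        exact ih (n - 2*m) (by omega) z hz

lemma pi_vanish_pow {B : Type*} [Semiring B] [Algebra ℂ B] (π : H →ₐ[ℂ] B)
    {a : H} (Φ : H →ₐ[ℂ] ℂ) {m : ℕ} (hm : 1 ≤ m) (hgl : IsGroupLikeElem' a)
    (hS : ∀ x : H, (⇑S)^[2 * m] x = a * convConj Φ x * HopfAlgebra.antipode (R := ℂ) a)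
    (Y : Submodule ℂ H) (hY : NiceC Y)
    (hπbase : ∀ j, j < 2*m → ∀ z ∈ Y, π ((⇑S)^[j] z) = 0)
    (hΦbase : ∀ j, j < 2*m → ∀ z ∈ Y, Φ ((⇑S)^[j] z) = 0) :
    ∀ n, ∀ z ∈ Y, π ((⇑S)^[n] z) = 0 := by
  have hΦall := phi_vanish_pow Φ hm hgl hS Y hΦbase
  intro n
  induction n using Nat.strong_induction_on with
  | _ n ih =>
      intro z hz
      by_cases hn : n < 2*m
      · exact hπbase n hn z hz
      · push_neg at hn
        have h1 : n = 2*m + (n - 2*m) := by omega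
        set Zn := Y.map (SP (n - 2*m)) with hZn
        have hw : (⇑S)^[n - 2*m] z ∈ Zn := mem_map_SP hz
        have hZnice : NiceC Zn := nice_pow hY _
        have hφZn : ∀ u ∈ Zn, Φ.toLinearMap u = 0 := by
          rintro u ⟨z', hz', rfl⟩
          simpa using hΦall (n - 2*m) z' hz'
        have hψZn : ∀ u ∈ Zn, (Φ.toLinearMap ∘ₗ HopfAlgebra.antipode (R := ℂ)) u = 0 := by
          rintro u ⟨z', hz', rfl⟩
          simp only [LinearMap.comp_apply, AlgHom.toLinearMap_apply, SP_apply]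
          rw [← Function.iterate_succ_apply' (⇑S) (n - 2*m) z']
          exact hΦall (n - 2*m + 1) z' hz'
        have hπZn : ∀ u ∈ Zn, π u = 0 := by
          rintro u ⟨z', hz', rfl⟩
          simpa using ih (n - 2*m) (by omega) z' hz'
        have hT : convConj Φ ((⇑S)^[n - 2*m] z) ∈ Zn := by
          have h2 : lconv Φ.toLinearMap ((⇑S)^[n - 2*m] z) ∈ Zn :=
            lconv_mem hZnice _ hφZn hw
          exact rconv_mem hZnice _ hψZn h2
        rw [h1, Function.iterate_add_apply, hS, map_mul, map_mul, hπZn _ hT]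
        rw [mul_zero, zero_mul]

end Aux9
section AuxTwist
variable {H : Type*} [Ring H] [StarRing H] [Algebra ℂ H] [StarModule ℂ H]

/-- twist a linear map by stars on both sides -/
noncomputable def starTwist {B : Type*} [AddCommMonoid B] [Module ℂ B]
    [StarAddMonoid B] [StarModule ℂ B] (f : H →ₗ[ℂ] B) : H →ₗ[ℂ] B where
  toFun := fun x => star (f (star x))
  map_add' := fun x y => by simp [star_add]
  map_smul' := fun c x => by simp [star_smul]

@[simp] lemma starTwist_apply {B : Type*} [AddCommMonoid B] [Module ℂ B]
    [StarAddMonoid B] [StarModule ℂ B] (f : H →ₗ[ℂ] B) (x : H) :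
    starTwist f x = star (f (star x)) := rfl

end AuxTwist

theorem stmt9 (H : Type*) [Ring H] [HopfAlgebra ℂ H] [StarRing H] [StarModule ℂ H]
    -- `H` is a Hopf `*`-algebra:
    (hstar_comul : ∀ x : H,
      Coalgebra.comul (R := ℂ) (star x) = starTensor (Coalgebra.comul (R := ℂ) x))
    (hstar_counit : ∀ x : H,
      Coalgebra.counit (R := ℂ) (star x) = starRingEnd ℂ (Coalgebra.counit (R := ℂ) x))
    -- the underlying Hopf algebra has a regular antipode:
    (hreg : HasRegularAntipode H)
    -- `H` is inner unitary:
    (hunit : Nonempty (InnerUnitaryWitness H)) :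
    InnerLinear H := by
  classical
  obtain ⟨W⟩ := hunit
  letI : NormedRing W.A := W.nring
  letI : StarRing W.A := W.sring
  letI : NormedAlgebra ℂ W.A := W.nalg
  letI : StarModule ℂ W.A := W.smod
  haveI : FiniteDimensional ℂ W.A := W.findim
  obtain ⟨a, Φ, m, hm, hgl, hS⟩ := hreg
  set Sm := HopfAlgebra.antipode (R := ℂ) (A := H) with hSm
  set π := W.π with hπdef
  have hsurj : Function.Surjective (⇑Sm) :=
    antipode_surjective ⟨a, Φ, m, hm, hgl, hS⟩
  set n2 := 2 * m with hn2
  -- the finite-codimension ideal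
  set g0 : H →ₗ[ℂ] W.A := π.toLinearMap with hg0
  set g1 : Fin n2 → (H →ₗ[ℂ] W.A) :=
    fun j => starTwist (π.toLinearMap ∘ₗ SP (j : ℕ)) with hg1
  set g2 : Fin n2 → (H →ₗ[ℂ] ℂ) := fun j => Φ.toLinearMap ∘ₗ SP (j : ℕ) with hg2
  set g3 : Fin n2 → (H →ₗ[ℂ] ℂ) :=
    fun j => starTwist (Φ.toLinearMap ∘ₗ SP (j : ℕ)) with hg3
  set Gmap : H →ₗ[ℂ] W.A × ((Fin n2 → W.A) × ((Fin n2 → ℂ) × (Fin n2 → ℂ))) :=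
    LinearMap.prod g0 (LinearMap.prod (LinearMap.pi g1)
      (LinearMap.prod (LinearMap.pi g2) (LinearMap.pi g3))) with hGmap
  set I := LinearMap.ker Gmap with hI
  have mem_I : ∀ x : H, x ∈ I ↔ (π x = 0 ∧ ∀ j : Fin n2,
      (π ((⇑Sm)^[(j : ℕ)] (star x)) = 0 ∧ Φ ((⇑Sm)^[(j : ℕ)] x) = 0 ∧
        Φ ((⇑Sm)^[(j : ℕ)] (star x)) = 0)) := by
    intro x
    rw [hI, LinearMap.mem_ker, hGmap]
    simp only [LinearMap.prod_apply, Pi.prod, Prod.mk_eq_zero, Function.prod_apply, LinearMap.pi_apply,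
      funext_iff, Pi.zero_apply]
    constructor
    · rintro ⟨h0, h1, h2, h3⟩
      refine ⟨h0, fun j => ⟨?_, ?_, ?_⟩⟩
      · have := h1 j
        rw [hg1] at this
        simp only [starTwist_apply, LinearMap.comp_apply, AlgHom.toLinearMap_apply,
          SP_apply, star_eq_zero] at this
        exact this
      · have := h2 j
        rw [hg2] at this
        simpa using this
      · have := h3 j
        rw [hg3] at this
        simp only [starTwist_apply, LinearMap.comp_apply, AlgHom.toLinearMap_apply,
          SP_apply, star_eq_zero] at this
        exact this
    · rintro ⟨h0, hj⟩
      refine ⟨h0, fun j => ?_, fun j => ?_, fun j => ?_⟩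
      · rw [hg1]
        simp only [starTwist_apply, LinearMap.comp_apply, AlgHom.toLinearMap_apply,
          SP_apply, star_eq_zero]
        exact (hj j).1
      · rw [hg2]
        simpa using (hj j).2.1
      · rw [hg3]
        simp only [starTwist_apply, LinearMap.comp_apply, AlgHom.toLinearMap_apply,
          SP_apply, star_eq_zero]
        exact (hj j).2.2
  -- I is a two-sided ideal
  have hIts : IsTwoSidedIdealSub I := by
    have key : ∀ x y : H, x ∈ I → (y * x ∈ I ∧ x * y ∈ I) := by
      intro x y hx
      rw [mem_I] at hx
      obtain ⟨h0, hj⟩ := hx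
      have mul_vanish : ∀ (j : ℕ) (u v : H), π ((⇑Sm)^[j] u) = 0 →
          π ((⇑Sm)^[j] (u * v)) = 0 ∧ π ((⇑Sm)^[j] (v * u)) = 0 := by
        intro j u v hu
        rcases Spow_mul (H := H) j with h | h
        · rw [h u v, h v u, map_mul, map_mul, hu, zero_mul, mul_zero]
          exact ⟨rfl, rfl⟩
        · rw [h u v, h v u, map_mul, map_mul, hu, zero_mul, mul_zero]
          exact ⟨rfl, rfl⟩
      have mul_vanishΦ : ∀ (j : ℕ) (u v : H), Φ ((⇑Sm)^[j] u) = 0 →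
          Φ ((⇑Sm)^[j] (u * v)) = 0 ∧ Φ ((⇑Sm)^[j] (v * u)) = 0 := by
        intro j u v hu
        rcases Spow_mul (H := H) j with h | h
        · rw [h u v, h v u, map_mul, map_mul, hu, zero_mul, mul_zero]
          exact ⟨rfl, rfl⟩
        · rw [h u v, h v u, map_mul, map_mul, hu, zero_mul, mul_zero]
          exact ⟨rfl, rfl⟩
      constructor
      · rw [mem_I]
        refine ⟨by rw [map_mul, h0, mul_zero], fun j => ?_⟩
        refine ⟨?_, ?_, ?_⟩
        · rw [star_mul]
          exact (mul_vanish j (star x) (star y) ((hj j).1)).1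
        · exact (mul_vanishΦ j x y ((hj j).2.1)).2
        · rw [star_mul]
          exact (mul_vanishΦ j (star x) (star y) ((hj j).2.2)).1
      · rw [mem_I]
        refine ⟨by rw [map_mul, h0, zero_mul], fun j => ?_⟩
        refine ⟨?_, ?_, ?_⟩
        · rw [star_mul]
          exact (mul_vanish j (star x) (star y) ((hj j).1)).2
        · exact (mul_vanishΦ j x y ((hj j).2.1)).1
        · rw [star_mul]
          exact (mul_vanishΦ j (star x) (star y) ((hj j).2.2)).2
    exact ⟨fun y {x} hx => (key x y hx).1, fun {x} y hx => (key x y hx).2⟩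
  -- finite codimension
  have hIfd : FiniteDimensional ℂ (H ⧸ I) := by
    have e := LinearMap.quotKerEquivRange Gmap
    haveI : FiniteDimensional ℂ (W.A × ((Fin n2 → W.A) × ((Fin n2 → ℂ) × (Fin n2 → ℂ)))) := by
      infer_instance
    haveI : FiniteDimensional ℂ (LinearMap.range Gmap) := inferInstance
    exact e.symm.finiteDimensional
  refine ⟨I, hIts, hIfd, ?_⟩
  intro J hJ hJI
  -- conditions satisfied by elements of J
  have hJcond : ∀ {z : H}, z ∈ J → (π z = 0 ∧ ∀ j : ℕ, j < n2 →
      (π ((⇑Sm)^[j] (star z)) = 0 ∧ Φ ((⇑Sm)^[j] z) = 0 ∧ Φ ((⇑Sm)^[j] (star z)) = 0)) := by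
    intro z hz
    have := (mem_I z).mp (hJI hz)
    exact ⟨this.1, fun j hj => this.2 ⟨j, hj⟩⟩
  have hSJ : ∀ (j : ℕ) {z : H}, z ∈ J → (⇑Sm)^[j] z ∈ J := by
    intro j
    induction j with
    | zero => intro z hz; exact hz
    | succ j ih =>
        intro z hz
        rw [Function.iterate_succ_apply']
        exact hJ.antipode_mem _ (ih hz)
  set J1 : Submodule ℂ H := starSub J with hJ1
  have hπJ : ∀ j, j < n2 → ∀ z ∈ J, π ((⇑Sm)^[j] z) = 0 :=
    fun j _ z hz => (hJcond (hSJ j hz)).1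
  have hπJ1 : ∀ j, j < n2 → ∀ z ∈ J1, π ((⇑Sm)^[j] z) = 0 := by
    intro j hj z hz
    have := ((hJcond (hz : star z ∈ J)).2 j hj).1
    rwa [star_star] at this
  have hΦJ : ∀ j, j < n2 → ∀ z ∈ J, Φ ((⇑Sm)^[j] z) = 0 :=
    fun j hj z hz => ((hJcond hz).2 j hj).2.1
  have hΦJ1 : ∀ j, j < n2 → ∀ z ∈ J1, Φ ((⇑Sm)^[j] z) = 0 := by
    intro j hj z hz
    have := ((hJcond (hz : star z ∈ J)).2 j hj).2.2
    rwa [star_star] at this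
  have hNJ : NiceC J := hJ.comul_mem
  have hNJ1 : NiceC J1 := NiceC.starSub hstar_comul hNJ
  have hTSJ : IsTwoSidedIdealSub J := hJ.toIsTwoSidedIdealSub
  have hTSJ1 : IsTwoSidedIdealSub J1 := ts_starSub hTSJ
  have hπpowJ : ∀ n, ∀ z ∈ J, π ((⇑Sm)^[n] z) = 0 :=
    pi_vanish_pow π Φ hm hgl hS J hNJ hπJ hΦJ
  have hπpowJ1 : ∀ n, ∀ z ∈ J1, π ((⇑Sm)^[n] z) = 0 :=
    pi_vanish_pow π Φ hm hgl hS J1 hNJ1 hπJ1 hΦJ1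
  have hεJ : ∀ z ∈ J, Coalgebra.counit (R := ℂ) z = 0 := hJ.counit_eq_zero
  have hεJ1 : ∀ z ∈ J1, Coalgebra.counit (R := ℂ) z = 0 := by
    intro z hz
    have h1 := hstar_counit (star z)
    rw [star_star] at h1
    rw [h1, hεJ _ (hz : star z ∈ J), map_zero]
  -- the generators of the Hopf *-ideal K
  set Ji : Bool → Submodule ℂ H := fun b => if b then J1 else J with hJi
  have hJiTS : ∀ b, IsTwoSidedIdealSub (Ji b) := by
    intro b; cases b
    · simpa [hJi] using hTSJ
    · simpa [hJi] using hTSJ1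
  have hJiN : ∀ b, NiceC (Ji b) := by
    intro b; cases b
    · simpa [hJi] using hNJ
    · simpa [hJi] using hNJ1
  have hJiε : ∀ b, ∀ z ∈ Ji b, Coalgebra.counit (R := ℂ) z = 0 := by
    intro b; cases b
    · simpa [hJi] using hεJ
    · simpa [hJi] using hεJ1
  have hJiπ : ∀ b, ∀ n, ∀ z ∈ Ji b, π ((⇑Sm)^[n] z) = 0 := by
    intro b; cases b
    · simpa [hJi] using hπpowJ
    · simpa [hJi] using hπpowJ1
  have hJistar : ∀ b, starSub (Ji b) = Ji (!b) := by
    intro b; cases b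
    · simp [hJi, hJ1]
    · simp [hJi, hJ1]
  set Kgen : ℕ × Bool × Bool → Submodule ℂ H := fun p =>
    if p.2.2 then starSub ((Ji p.2.1).map (SP p.1)) else (Ji p.2.1).map (SP p.1) with hKgen
  set K := ⨆ p, Kgen p with hKdef
  have hle : ∀ p, Kgen p ≤ K := le_iSup _
  have hKgenTS : ∀ p, IsTwoSidedIdealSub (Kgen p) := by
    rintro ⟨n, i, s⟩
    cases s
    · simpa [hKgen] using ts_map_pow hsurj n (hJiTS i)
    · simpa [hKgen] using ts_starSub (ts_map_pow hsurj n (hJiTS i))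
  have hKgenN : ∀ p, NiceC (Kgen p) := by
    rintro ⟨n, i, s⟩
    cases s
    · simpa [hKgen] using nice_pow (hJiN i) n
    · simpa [hKgen] using NiceC.starSub hstar_comul (nice_pow (hJiN i) n)
  have hKgenε : ∀ p, ∀ z ∈ Kgen p, Coalgebra.counit (R := ℂ) z = 0 := by
    rintro ⟨n, i, s⟩
    cases s
    · simp only [hKgen, if_neg Bool.false_ne_true]
      rintro z ⟨w, hw, rfl⟩
      rw [SP_apply, counit_Spow]
      exact hJiε i w hw
    · simp only [hKgen, if_pos rfl]
      intro z hz
      rcases mem_starSub.mp hz with ⟨w, hw, hwz⟩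
      have h1 := hstar_counit (star z)
      rw [star_star] at h1
      rw [h1, ← hwz]
      rw [SP_apply, counit_Spow, hJiε i w hw, map_zero]
  have hKgenπ : ∀ p, ∀ z ∈ Kgen p, π z = 0 := by
    rintro ⟨n, i, s⟩
    cases s
    · simp only [hKgen, if_neg Bool.false_ne_true]
      rintro z ⟨w, hw, rfl⟩
      rw [SP_apply]
      exact hJiπ i n w hw
    · simp only [hKgen, if_pos rfl]
      intro z hz
      rcases mem_starSub.mp hz with ⟨w, hw, hwz⟩
      have h1 : π (star z) = 0 := by
        rw [← hwz, SP_apply]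
        exact hJiπ i n w hw
      have h2 : π z = star (π (star z)) := by
        rw [← W.star_map, star_star]
      rw [h2, h1, star_zero]
  have hKgenstar : ∀ p, ∀ z ∈ Kgen p, star z ∈ K := by
    rintro ⟨n, i, s⟩
    cases s
    · intro z hz
      refine hle (n, i, true) ?_
      simp only [hKgen, if_pos rfl, mem_starSub, star_star]
      exact hz
    · intro z hz
      refine hle (n, i, false) ?_
      have := mem_starSub.mp hz
      simpa [hKgen] using this
  have hKgenS : ∀ p, ∀ z ∈ Kgen p, Sm z ∈ K := by
    rintro ⟨n, i, s⟩
    cases s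
    · simp only [hKgen, if_neg Bool.false_ne_true]
      rintro z ⟨w, hw, rfl⟩
      refine hle (n+1, i, false) ?_
      simp only [hKgen, if_neg Bool.false_ne_true]
      refine ⟨w, hw, ?_⟩
      rw [SP_apply, SP_apply, Function.iterate_succ_apply']
    · simp only [hKgen, if_pos rfl]
      intro z hz
      rcases mem_starSub.mp hz with ⟨w, hw, hwz⟩
      cases n with
      | zero =>
          have hz' : z ∈ Ji (!i) := by
            rw [← hJistar i]
            rw [mem_starSub, ← hwz, SP_apply]
            simpa using hw
          refine hle (1, !i, false) ?_
          simp only [hKgen, if_neg Bool.false_ne_true]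
          exact ⟨z, hz', by simp [hSm]⟩
      | succ n' =>
          set u := (⇑Sm)^[n'] w with hu
          have h1 : star z = Sm u := by
            rw [← hwz, SP_apply, Function.iterate_succ_apply', hu]
          have h2 : Sm z = star u := by
            have h3 : z = star (Sm u) := by rw [← h1, star_star]
            rw [h3, S_star_S hstar_comul hstar_counit]
          refine hle (n', i, true) ?_
          simp only [hKgen, if_pos rfl, mem_starSub, h2, star_star]
          exact ⟨w, hw, by rw [SP_apply]⟩
  -- assemble: K is a Hopf *-ideal annihilated by π
  have hKTS : IsTwoSidedIdealSub K := by
    constructor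
    · intro x aa haK
      refine Submodule.iSup_induction Kgen (motive := fun z => x * z ∈ K) haK
        (fun p z hz => hle p ((hKgenTS p).mul_mem_left x hz)) (by simpa using K.zero_mem)
        (fun u v hu hv => by rw [mul_add]; exact K.add_mem hu hv)
    · intro aa x haK
      refine Submodule.iSup_induction Kgen (motive := fun z => z * x ∈ K) haK
        (fun p z hz => hle p ((hKgenTS p).mul_mem_right x hz)) (by simpa using K.zero_mem)
        (fun u v hu hv => by rw [add_mul]; exact K.add_mem hu hv)
  have hKε : ∀ z ∈ K, Coalgebra.counit (R := ℂ) z = 0 := by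
    intro z hz
    refine Submodule.iSup_induction Kgen (motive := fun z => Coalgebra.counit (R := ℂ) z = 0) hz
      hKgenε (map_zero _) (fun u v hu hv => by rw [map_add, hu, hv, add_zero])
  have hKcomul : ∀ z ∈ K, Coalgebra.comul (R := ℂ) z ∈ subTensor K ⊤ ⊔ subTensor ⊤ K := by
    intro z hz
    refine Submodule.iSup_induction Kgen
      (motive := fun z => Coalgebra.comul (R := ℂ) z ∈ subTensor K ⊤ ⊔ subTensor ⊤ K) hz
      (fun p z hz => ?_) (by simp) (fun u v hu hv => by
        rw [map_add]; exact Submodule.add_mem _ hu hv)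
    have := hKgenN p z hz
    refine Set.mem_of_subset_of_mem ?_ this
    exact sup_le_sup (subTensor_mono (hle p) le_rfl) (subTensor_mono le_rfl (hle p))
  have hKS : ∀ z ∈ K, Sm z ∈ K := by
    intro z hz
    refine Submodule.iSup_induction Kgen (motive := fun z => Sm z ∈ K) hz hKgenS
      (by simpa using K.zero_mem) (fun u v hu hv => by rw [map_add]; exact K.add_mem hu hv)
  have hKstar : ∀ z ∈ K, star z ∈ K := by
    intro z hz
    refine Submodule.iSup_induction Kgen (motive := fun z => star z ∈ K) hz hKgenstar
      (by simpa using K.zero_mem) (fun u v hu hv => by rw [star_add]; exact K.add_mem hu hv)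
  have hKπ : ∀ z ∈ K, π z = 0 := by
    intro z hz
    refine Submodule.iSup_induction Kgen (motive := fun z => π z = 0) hz hKgenπ (map_zero _)
      (fun u v hu hv => by rw [map_add, hu, hv, add_zero])
  have hKHopf : IsHopfIdeal K :=
    { hKTS with
      counit_eq_zero := hKε
      comul_mem := hKcomul
      antipode_mem := fun z hz => hKS z hz }
  have hKbot : K = ⊥ := W.faithful K hKHopf hKstar hKπ
  have hJK : J ≤ K := by
    intro z hz
    refine hle (0, false, false) ?_
    simp only [hKgen, if_neg Bool.false_ne_true]
    exact ⟨z, by simpa [hJi] using hz, by simp⟩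
  rw [hKbot] at hJK
  exact le_bot_iff.mp hJK
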